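/- arXiv:1401.5958 — 2 statements merged into one kernel-verified Lean document; each statement's English description precedes it below -/
import Mathlib

section
/- For every non-negative integer n, the n-th Bernoulli number (with convention B_1 = -1/2) satisfies B_n = n * ∑_{j=0}^{n} ((-1)^{n+j} / (n+j)) * C(2n, n+j) * s(n+j+1, j+1) for n ≥ 1, where s denotes the unsigned Stirling number of the first kind. -/
/-- The unsigned `r`-Stirling number of the first kind. -/
def rStirling1 (r : ℕ) : ℕ → ℕ → ℕ
  | 0, k => if r = 0 ∧ k = 0 then 1 else 0
  | n + 1, k =>
    if n + 1 < r then 0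
    else if n + 1 = r then (if k = r then 1 else 0)
    else (if k = 0 then 0 else rStirling1 r n (k - 1)) + n * rStirling1 r n k

/-- The `r`-Stirling number of the second kind. -/
def rStirling2 (r : ℕ) : ℕ → ℕ → ℕ
  | 0, k => if r = 0 ∧ k = 0 then 1 else 0
  | n + 1, k =>
    if n + 1 < r then 0
    else if n + 1 = r then (if k = r then 1 else 0)
    else (if k = 0 then 0 else rStirling2 r n (k - 1)) + k * rStirling2 r n k

/-- The unsigned Stirling number of the first kind. -/
def stirling1 (n k : ℕ) : ℕ := rStirling1 0 n k

open Finset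

lemma stirling1_zero (k : ℕ) : stirling1 0 k = if k = 0 then 1 else 0 := by
  simp [stirling1, rStirling1]

lemma stirling1_succ (n k : ℕ) :
    stirling1 (n+1) k = (if k = 0 then 0 else stirling1 n (k-1)) + n * stirling1 n k := by
  simp [stirling1, rStirling1]

lemma stirling1_eq_zero : ∀ {n k : ℕ}, n < k → stirling1 n k = 0 := by
  intro n
  induction n with
  | zero => intro k hk; rw [stirling1_zero, if_neg]; omega
  | succ n ih =>
    intro k hk
    rw [stirling1_succ, if_neg (by omega), ih (by omega), ih (by omega), mul_zero]
    rfl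

lemma stirling1_self (n : ℕ) : stirling1 n n = 1 := by
  induction n with
  | zero => simp [stirling1_zero]
  | succ n ih =>
    rw [stirling1_succ, if_neg (by omega)]
    simp [ih, stirling1_eq_zero (Nat.lt_succ_self n)]

lemma stirling1_zero_right {n : ℕ} (hn : 1 ≤ n) : stirling1 n 0 = 0 := by
  induction n with
  | zero => omega
  | succ n ih =>
    rw [stirling1_succ, if_pos rfl]
    rcases Nat.eq_zero_or_pos n with h | h
    · subst h; simp [stirling1_zero]
    · rw [ih h, mul_zero]
      rfl

/-- `Esym N k` = elementary symmetric polynomial `e_k(1,…,N)`. -/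
def Esym : ℕ → ℕ → ℕ
  | 0, k => if k = 0 then 1 else 0
  | N+1, k => Esym N k + (N+1) * (if k = 0 then 0 else Esym N (k-1))

lemma Esym_zero_right (N : ℕ) : Esym N 0 = 1 := by
  induction N with
  | zero => simp [Esym]
  | succ N ih => simp [Esym, ih]

lemma Esym_eq_zero : ∀ {N k : ℕ}, N < k → Esym N k = 0 := by
  intro N
  induction N with
  | zero => intro k hk; simp only [Esym]; rw [if_neg]; omega
  | succ N ih =>
    intro k hk
    simp only [Esym]
    rw [ih (by omega), if_neg (by omega), ih (by omega)]
    simp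

lemma stirling1_eq_Esym : ∀ N n : ℕ, n ≤ N → stirling1 (N+1) (N+1-n) = Esym N n := by
  intro N
  induction N with
  | zero =>
    intro n hn
    interval_cases n
    simpa [Esym] using stirling1_self 1
  | succ N ih =>
    intro n hn
    rcases Nat.eq_zero_or_pos n with h | h
    · subst h
      simpa [Esym_zero_right] using stirling1_self (N+2)
    · have h2 : N + 2 - n ≠ 0 := by omega
      rw [show N + 1 + 1 = (N + 1) + 1 from rfl, stirling1_succ, if_neg h2]
      have e1 : N + 1 + 1 - n - 1 = N + 1 - n := by omega
      have e2 : N + 1 + 1 - n = N + 1 - (n - 1) := by omega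
      rw [e1, e2]
      have t2 : stirling1 (N+1) (N+1-(n-1)) = Esym N (n-1) := ih (n-1) (by omega)
      have t1 : stirling1 (N+1) (N+1-n) = Esym N n := by
        rcases Nat.lt_or_ge N n with h3 | h3
        · have : N + 1 - n = 0 := by omega
          rw [this, stirling1_zero_right (by omega), Esym_eq_zero (by omega)]
        · exact ih n h3
      rw [t1, t2, Esym, if_neg (by omega)]

/-- Newton's identity for `e_k(0,1,…,m)`. -/
lemma newton (m : ℕ) : ∀ n : ℕ, (n : ℚ) * (Esym m n : ℚ) =
    ∑ j ∈ range n, (-1:ℚ)^j * (Esym m (n-1-j) : ℚ) * (∑ i ∈ range (m+1), (i:ℚ)^(j+1)) := by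
  induction m with
  | zero =>
    intro n
    have h0 : ∀ j : ℕ, (∑ i ∈ range 1, (i:ℚ)^(j+1)) = 0 := by
      intro j; simp
    rcases Nat.eq_zero_or_pos n with h | h
    · subst h; simp
    · rw [Finset.sum_congr rfl (fun j _ => by rw [h0 j, mul_zero]), Finset.sum_const_zero]
      simp only [Esym]
      rw [if_neg (by omega)]
      simp
  | succ m ih =>
    intro n
    rcases Nat.eq_zero_or_pos n with h | h
    · subst h; simp
    obtain ⟨n', rfl⟩ : ∃ n', n = n' + 1 := ⟨n - 1, by omega⟩
    set a : ℚ := (m:ℚ) + 1 with ha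
    set pw : ℕ → ℚ := fun t => ∑ i ∈ range (m+1), (i:ℚ)^t with hpw
    have hpw' : ∀ t, (∑ i ∈ range (m+1+1), (i:ℚ)^t) = pw t + a^t := by
      intro t
      rw [Finset.sum_range_succ]
      push_cast
      rfl
    have hEcast : ∀ k, ((Esym (m+1) k : ℚ)) =
        (Esym m k : ℚ) + a * (if k = 0 then 0 else (Esym m (k-1) : ℚ)) := by
      intro k
      rcases eq_or_ne k 0 with h | h
      · subst h
        simp only [Esym, if_pos]
        push_cast
        ring
      · simp only [Esym, if_neg h]
        push_cast
        ring
    -- expand the RHS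
    have expand : ∀ j ∈ range (n'+1),
        (-1:ℚ)^j * (Esym (m+1) (n'+1-1-j) : ℚ) * (∑ i ∈ range (m+1+1), (i:ℚ)^(j+1)) =
        ((-1:ℚ)^j * (Esym m (n'-j) : ℚ) * pw (j+1)
        + (-1:ℚ)^j * (a * (if n'-j = 0 then 0 else (Esym m (n'-j-1) : ℚ))) * pw (j+1))
        + ((-1:ℚ)^j * (Esym m (n'-j) : ℚ) * a^(j+1)
        + (-1:ℚ)^j * (a * (if n'-j = 0 then 0 else (Esym m (n'-j-1) : ℚ))) * a^(j+1)) := by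
      intro j _
      have : n' + 1 - 1 - j = n' - j := by omega
      rw [this, hpw' (j+1), hEcast (n'-j)]
      ring
    rw [Finset.sum_congr rfl expand, Finset.sum_add_distrib, Finset.sum_add_distrib,
      Finset.sum_add_distrib]
    -- A
    have hA : ∑ j ∈ range (n'+1), (-1:ℚ)^j * (Esym m (n'-j) : ℚ) * pw (j+1)
        = ((n'+1 : ℕ):ℚ) * (Esym m (n'+1) : ℚ) := by
      rw [ih (n'+1)]
      exact Finset.sum_congr rfl (fun j _ => by norm_num; left; rfl)
    -- B
    have hB : ∑ j ∈ range (n'+1),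
        (-1:ℚ)^j * (a * (if n'-j = 0 then 0 else (Esym m (n'-j-1) : ℚ))) * pw (j+1)
        = a * ((n' : ℚ) * (Esym m n' : ℚ)) := by
      rw [Finset.sum_range_succ, if_pos (by omega)]
      have h1 : (-1:ℚ)^n' * (a * 0) * pw (n'+1) = 0 := by ring
      rw [h1, add_zero, ih n', Finset.mul_sum]
      refine Finset.sum_congr rfl (fun j hj => ?_)
      have hj' : j < n' := mem_range.mp hj
      rw [if_neg (by omega)]
      have h2 : n' - j - 1 = n' - 1 - j := by omega
      rw [h2]
      simp only [hpw]
      ring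
    -- C + D
    have hCD : (∑ j ∈ range (n'+1), (-1:ℚ)^j * (Esym m (n'-j) : ℚ) * a^(j+1))
        + (∑ j ∈ range (n'+1),
            (-1:ℚ)^j * (a * (if n'-j = 0 then 0 else (Esym m (n'-j-1) : ℚ))) * a^(j+1))
        = a * (Esym m n' : ℚ) := by
      rw [Finset.sum_range_succ (f := fun j => (-1:ℚ)^j * (a * (if n'-j = 0 then 0 else (Esym m (n'-j-1) : ℚ))) * a^(j+1)), if_pos (by omega)]
      rw [Finset.sum_range_succ' (f := fun j => (-1:ℚ)^j * (Esym m (n'-j) : ℚ) * a^(j+1))]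
      simp only [mul_zero, zero_mul, add_zero, Nat.sub_zero, pow_zero, one_mul]
      have : ∀ j ∈ range n',
          (-1:ℚ)^(j+1) * (Esym m (n'-(j+1)) : ℚ) * a^(j+1+1)
          = -((-1:ℚ)^j * (a * (if n'-j = 0 then 0 else (Esym m (n'-j-1) : ℚ))) * a^(j+1)) := by
        intro j hj
        have hj' : j < n' := mem_range.mp hj
        rw [if_neg (by omega)]
        have : n' - (j+1) = n' - j - 1 := by omega
        rw [this]
        ring
      rw [Finset.sum_congr rfl this, Finset.sum_neg_distrib]
      ring
    rw [hA, hB, hCD, hEcast (n'+1), if_neg (by omega)]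
    push_cast
    ring

noncomputable def Pb (j : ℕ) : Polynomial ℚ :=
  Polynomial.C (((j:ℚ)+1)⁻¹) * (Polynomial.bernoulli (j+1) - Polynomial.C (bernoulli (j+1)))

lemma Pb_eval (j m : ℕ) : (Pb j).eval ((m:ℕ):ℚ) = ∑ i ∈ range m, (i:ℚ)^j := by
  have hj : ((j:ℚ)+1) ≠ 0 := by positivity
  simp only [Pb, Polynomial.eval_mul, Polynomial.eval_C, Polynomial.eval_sub]
  rw [show j + 1 = j.succ from rfl, Polynomial.bernoulli_succ_eval]
  field_simp
  ring

lemma Pb_eval_one (j : ℕ) : (Pb (j+1)).eval 1 = 0 := by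
  have := Pb_eval (j+1) 1
  norm_num at this
  simpa using this

lemma bernoulli_poly_natDegree_le (n : ℕ) : (Polynomial.bernoulli n).natDegree ≤ n := by
  rw [Polynomial.bernoulli_def]
  refine Polynomial.natDegree_sum_le_of_forall_le _ _ (fun i hi => ?_)
  exact le_trans (Polynomial.natDegree_monomial_le _) (by simpa using Nat.lt_succ_iff.mp (mem_range.mp hi))

lemma Pb_natDegree_le (j : ℕ) : (Pb j).natDegree ≤ j + 1 := by
  refine le_trans (Polynomial.natDegree_mul_le) ?_
  simp only [Polynomial.natDegree_C, zero_add]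
  refine le_trans (Polynomial.natDegree_sub_le _ _) ?_
  simp [bernoulli_poly_natDegree_le]

lemma Pb_derivative (j : ℕ) : (Pb j).derivative = Polynomial.bernoulli j := by
  have hj : ((j:ℚ)+1) ≠ 0 := by positivity
  rw [Pb, Polynomial.derivative_C_mul, Polynomial.derivative_sub,
    Polynomial.derivative_C, sub_zero, Polynomial.derivative_bernoulli_add_one]
  rw [show ((j : Polynomial ℚ) + 1) = Polynomial.C ((j:ℚ)+1) by rw [map_add, Polynomial.C_1, Polynomial.C_eq_natCast]]
  rw [← mul_assoc, ← Polynomial.C_mul, inv_mul_cancel₀ hj, Polynomial.C_1, one_mul]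

lemma exists_F (n : ℕ) : ∃ F : Polynomial ℚ, F.natDegree ≤ 2*n
    ∧ (∀ m : ℕ, F.eval ((m:ℚ)+1) = (Esym m n : ℚ))
    ∧ (1 ≤ n → F.derivative.eval 1 = -(bernoulli n)/n) := by
  induction n using Nat.strong_induction_on with
  | _ n ih =>
  match n with
  | 0 =>
    refine ⟨1, by simp, fun m => by simp [Esym_zero_right], by omega⟩
  | (k+1) =>
    have hn0 : ((k:ℚ)+1) ≠ 0 := by positivity
    choose G hdeg hval hder using fun j (h : j < k+1) => ih j h
    set F : Polynomial ℚ := Polynomial.C (((k:ℚ)+1)⁻¹) *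
      ∑ j ∈ range (k+1), Polynomial.C ((-1:ℚ)^j) * (G (k-j) (by omega) * Pb (j+1)) with hF
    refine ⟨F, ?_, ?_, ?_⟩
    · refine le_trans (Polynomial.natDegree_mul_le) ?_
      simp only [Polynomial.natDegree_C, zero_add]
      refine Polynomial.natDegree_sum_le_of_forall_le _ _ (fun j hj => ?_)
      have hj' : j < k + 1 := mem_range.mp hj
      refine le_trans (Polynomial.natDegree_mul_le) ?_
      simp only [Polynomial.natDegree_C, zero_add]
      refine le_trans (Polynomial.natDegree_mul_le) ?_
      have h1 := hdeg (k-j) (by omega)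
      have h2 := Pb_natDegree_le (j+1)
      omega
    · intro m
      rw [hF, Polynomial.eval_mul, Polynomial.eval_C, Polynomial.eval_finset_sum]
      have hterm : ∀ j ∈ range (k+1),
          Polynomial.eval ((m:ℚ)+1) (Polynomial.C ((-1:ℚ)^j) * (G (k-j) (by omega) * Pb (j+1)))
          = (-1:ℚ)^j * (Esym m (k-j) : ℚ) * (∑ i ∈ range (m+1), (i:ℚ)^(j+1)) := by
        intro j hj
        rw [Polynomial.eval_mul, Polynomial.eval_mul, Polynomial.eval_C,
          hval (k-j) (by omega) m]
        have : ((m:ℚ)+1) = (((m+1:ℕ)):ℚ) := by push_cast; ring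
        rw [this, Pb_eval (j+1) (m+1)]
        ring
      have hN := newton m (k+1)
      simp only [Nat.add_sub_cancel] at hN
      rw [Finset.sum_congr rfl hterm, ← hN]
      push_cast
      field_simp
    · intro _
      rw [hF, Polynomial.derivative_C_mul, Polynomial.derivative_sum, Polynomial.eval_mul,
        Polynomial.eval_C, Polynomial.eval_finset_sum]
      have hterm : ∀ j ∈ range (k+1),
          Polynomial.eval 1 (Polynomial.derivative
            (Polynomial.C ((-1:ℚ)^j) * (G (k-j) (by omega) * Pb (j+1))))
          = (if k - j = 0 then 1 else 0) * ((-1:ℚ)^j * (Polynomial.bernoulli (j+1)).eval 1) := by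
        intro j hj
        rw [Polynomial.derivative_C_mul, Polynomial.derivative_mul, Polynomial.eval_mul,
          Polynomial.eval_C, Polynomial.eval_add, Polynomial.eval_mul, Polynomial.eval_mul,
          Pb_eval_one, mul_zero, zero_add, Pb_derivative]
        have h0 : (G (k-j) (by omega)).eval 1 = (Esym 0 (k-j) : ℚ) := by
          have := hval (k-j) (by omega) 0
          norm_num at this
          exact this
        rw [h0]
        rcases eq_or_ne (k-j) 0 with h | h
        · rw [h, if_pos rfl, Esym_zero_right]
          norm_num
        · rw [if_neg h, Esym_eq_zero (by omega)]
          norm_num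
      rw [Finset.sum_congr rfl hterm]
      rw [Finset.sum_eq_single k (fun j hj hne => by
          rw [if_neg (by simp at hj; omega), zero_mul]) (by simp)]
      rw [if_pos (by omega), one_mul, Polynomial.bernoulli_eval_one, bernoulli'_eq_bernoulli]
      have : ((-1:ℚ))^k * ((-1:ℚ)^(k+1) * bernoulli (k+1)) = - bernoulli (k+1) := by
        rw [← mul_assoc, ← pow_add]
        have : Odd (k + (k+1)) := ⟨k, by ring⟩
        rw [this.neg_one_pow]
        ring
      rw [this]
      push_cast
      field_simp

lemma natDegree_sub_comp_le (p : Polynomial ℚ) (d : ℕ) (h : p.natDegree ≤ d + 1) :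
    (p - p.comp (Polynomial.X + 1)).natDegree ≤ d := by
  have hq : (Polynomial.X + 1 : Polynomial ℚ) = Polynomial.X + Polynomial.C 1 := by
    rw [Polynomial.C_1]
  rcases eq_or_ne p.natDegree 0 with h0 | h0
  · obtain ⟨a, rfl⟩ : ∃ a, p = Polynomial.C a :=
      ⟨p.coeff 0, Polynomial.eq_C_of_natDegree_le_zero (le_of_eq h0)⟩
    simp
  · have hp0 : p ≠ 0 := fun hc => h0 (by simp [hc])
    have hnatq : (Polynomial.X + 1 : Polynomial ℚ).natDegree = 1 := by
      rw [hq]; exact Polynomial.natDegree_X_add_C 1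
    have hlc : p.leadingCoeff = (p.comp (Polynomial.X + 1)).leadingCoeff := by
      rw [Polynomial.leadingCoeff_comp (by rw [hnatq]; norm_num)]
      rw [hq, Polynomial.leadingCoeff_X_add_C, one_pow, mul_one]
    have hcomp0 : p.comp (Polynomial.X + 1) ≠ 0 := by
      intro hc
      have := hlc
      rw [hc, Polynomial.leadingCoeff_zero] at this
      exact hp0 (Polynomial.leadingCoeff_eq_zero.mp this)
    have hdeg : p.degree = (p.comp (Polynomial.X + 1)).degree := by
      rw [Polynomial.degree_eq_natDegree hp0, Polynomial.degree_eq_natDegree hcomp0,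
        Polynomial.natDegree_comp, hnatq, mul_one]
    have hlt := Polynomial.degree_sub_lt hdeg hp0 hlc
    rcases eq_or_ne (p - p.comp (Polynomial.X + 1)) 0 with hz | hz
    · rw [hz]; simp
    · have := Polynomial.natDegree_lt_natDegree hz hlt
      omega

lemma altsum : ∀ (d : ℕ) (p : Polynomial ℚ), p.natDegree ≤ d → ∀ N, d < N →
    ∑ k ∈ range (N+1), (-1:ℚ)^k * (N.choose k : ℚ) * p.eval (k:ℚ) = 0 := by
  intro d
  induction d with
  | zero =>
    intro p hp N hN
    obtain ⟨a, rfl⟩ : ∃ a, p = Polynomial.C a := ⟨p.coeff 0, Polynomial.eq_C_of_natDegree_le_zero hp⟩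
    simp only [Polynomial.eval_C]
    rw [show (∑ k ∈ range (N+1), (-1:ℚ)^k * (N.choose k : ℚ) * a)
        = (∑ k ∈ range (N+1), (-1:ℚ)^k * (N.choose k : ℚ)) * a from by rw [Finset.sum_mul]]
    have hz := Int.alternating_sum_range_choose (n := N)
    rw [if_neg (by omega)] at hz
    have : (∑ k ∈ range (N+1), (-1:ℚ)^k * (N.choose k : ℚ)) = 0 := by
      have := congrArg (fun z : ℤ => (z : ℚ)) hz
      push_cast at this
      simpa using this
    rw [this, zero_mul]
  | succ d ihd =>
    intro p hp N hN
    obtain ⟨M, rfl⟩ : ∃ M, N = M + 1 := ⟨N - 1, by omega⟩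
    set q : Polynomial ℚ := p - p.comp (Polynomial.X + 1) with hqdef
    have hqdeg : q.natDegree ≤ d := natDegree_sub_comp_le p d hp
    have hqeval : ∀ k : ℕ, q.eval (k:ℚ) = p.eval (k:ℚ) - p.eval ((k:ℚ)+1) := by
      intro k
      rw [hqdef, Polynomial.eval_sub, Polynomial.eval_comp]
      simp
    set A : ℕ → ℚ := fun k => (-1:ℚ)^(k+1) * (M.choose k : ℚ) * p.eval ((k:ℚ)+1) with hA
    set g : ℕ → ℚ := fun k => (-1:ℚ)^k * (M.choose k : ℚ) * p.eval (k:ℚ) with hg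
    have h1 : ∑ k ∈ range (M+1+1), (-1:ℚ)^k * ((M+1).choose k : ℚ) * p.eval (k:ℚ)
        = (∑ k ∈ range (M+1), (-1:ℚ)^(k+1) * ((M+1).choose (k+1) : ℚ) * p.eval ((k:ℚ)+1)) + p.eval 0 := by
      rw [Finset.sum_range_succ' (fun k => (-1:ℚ)^k * ((M+1).choose k : ℚ) * p.eval (k:ℚ))]
      norm_num
    have h2 : ∀ k ∈ range (M+1), (-1:ℚ)^(k+1) * ((M+1).choose (k+1) : ℚ) * p.eval ((k:ℚ)+1)
        = A k + g (k+1) := by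
      intro k hk
      rw [hA, hg, Nat.choose_succ_succ]
      push_cast
      ring
    have h3 : ∑ k ∈ range (M+1), g (k+1) = ∑ k ∈ range (M+1), g k - g 0 := by
      have e1 : ∑ k ∈ range (M+1+1), g k = (∑ k ∈ range (M+1), g (k+1)) + g 0 :=
        Finset.sum_range_succ' g (M+1)
      have e2 : ∑ k ∈ range (M+1+1), g k = (∑ k ∈ range (M+1), g k) + g (M+1) :=
        Finset.sum_range_succ g (M+1)
      have e3 : g (M+1) = 0 := by
        rw [hg]; simp [Nat.choose_succ_self]
      rw [e3, add_zero] at e2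
      rw [e2] at e1
      linarith
    have h4 : ∑ k ∈ range (M+1), (A k + g k) = 0 := by
      have : ∀ k ∈ range (M+1), A k + g k = (-1:ℚ)^k * (M.choose k : ℚ) * q.eval (k:ℚ) := by
        intro k hk
        rw [hA, hg, hqeval k]
        ring
      rw [Finset.sum_congr rfl this]
      exact ihd q hqdeg M (by omega)
    have hg0 : g 0 = p.eval 0 := by rw [hg]; norm_num
    calc ∑ k ∈ range (M+1+1), (-1:ℚ)^k * ((M+1).choose k : ℚ) * p.eval (k:ℚ)
        = (∑ k ∈ range (M+1), (A k + g (k+1))) + p.eval 0 := by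
          rw [h1, Finset.sum_congr rfl h2]
      _ = (∑ k ∈ range (M+1), A k) + (∑ k ∈ range (M+1), g (k+1)) + p.eval 0 := by
          rw [Finset.sum_add_distrib]
      _ = (∑ k ∈ range (M+1), A k) + (∑ k ∈ range (M+1), g k) - g 0 + p.eval 0 := by
          rw [h3]; ring
      _ = 0 := by
          rw [← Finset.sum_add_distrib, h4, hg0]; ring

theorem bernoulli_eq_sum_stirling1 (n : ℕ) (hn : 1 ≤ n) :
    bernoulli n = (n : ℚ) * ∑ j ∈ Finset.range (n + 1),
      ((-1 : ℚ) ^ (n + j) / (n + j)) * ((2 * n).choose (n + j)) *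
        stirling1 (n + j + 1) (j + 1) := by
  have hnQ : (n:ℚ) ≠ 0 := by positivity
  obtain ⟨F, hdeg, hval, hder⟩ := exists_F n
  set f : Polynomial ℚ := F.comp (Polynomial.X + 1) with hfdef
  have hfeval : ∀ x : ℚ, f.eval x = F.eval (x+1) := by
    intro x
    rw [hfdef, Polynomial.eval_comp]
    simp
  have hfdeg : f.natDegree ≤ 2*n := by
    rw [hfdef, Polynomial.natDegree_comp,
      show (Polynomial.X + 1 : Polynomial ℚ) = Polynomial.X + Polynomial.C 1 from by rw [Polynomial.C_1],
      Polynomial.natDegree_X_add_C, mul_one]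
    exact hdeg
  have hf0 : f.eval 0 = 0 := by
    have h00 := hval 0
    norm_num at h00
    rw [hfeval 0, zero_add, h00, Esym_eq_zero (show 0 < n by omega)]
    simp
  obtain ⟨g, hg⟩ : Polynomial.X ∣ f := by
    rw [Polynomial.X_dvd_iff, Polynomial.coeff_zero_eq_eval_zero, hf0]
  have hgdeg : g.natDegree ≤ 2*n - 1 := by
    rcases eq_or_ne g 0 with h | h
    · rw [h]; simp
    · have hX : (Polynomial.X : Polynomial ℚ) ≠ 0 := Polynomial.X_ne_zero
      have := Polynomial.natDegree_mul hX h
      rw [← hg, Polynomial.natDegree_X] at this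
      omega
  have hgk : ∀ k : ℕ, (k:ℚ) * g.eval (k:ℚ) = (Esym k n : ℚ) := by
    intro k
    have h1 : f.eval (k:ℚ) = (Esym k n : ℚ) := by rw [hfeval, hval k]
    rw [hg] at h1
    simpa using h1
  have hg0 : g.eval 0 = -(bernoulli n)/n := by
    have h1 : f.derivative.eval 0 = g.eval 0 := by
      rw [hg, Polynomial.derivative_mul, Polynomial.derivative_X]
      simp
    have h2 : f.derivative.eval 0 = F.derivative.eval 1 := by
      rw [hfdef, Polynomial.derivative_comp]
      simp
    rw [← h1, h2, hder hn]
  set h : ℕ → ℚ := fun k => (-1:ℚ)^k * ((2*n).choose k : ℚ) * g.eval (k:ℚ) with hh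
  have hsum : ∑ k ∈ range (2*n+1), h k = 0 := altsum (2*n-1) g hgdeg (2*n) (by omega)
  have hzero : ∀ b, 1 ≤ b → b < n → h b = 0 := by
    intro b hb1 hbn
    have hb : (b:ℚ) ≠ 0 := by positivity
    have := hgk b
    rw [Esym_eq_zero hbn] at this
    have hgb : g.eval (b:ℚ) = 0 := by
      rcases mul_eq_zero.mp this with h' | h'
      · exact absurd h' hb
      · exact h'
    rw [hh]
    simp [hgb]
  have hsplit : ∑ k ∈ Ico 0 n, h k + ∑ k ∈ Ico n (2*n+1), h k = ∑ k ∈ range (2*n+1), h k := by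
    rw [Finset.range_eq_Ico]
    exact Finset.sum_Ico_consecutive h (by omega) (by omega)
  have hlow : ∑ k ∈ Ico 0 n, h k = h 0 := by
    rw [← Finset.range_eq_Ico]
    refine Finset.sum_eq_single_of_mem 0 (mem_range.mpr (by omega)) (fun b hb hb0 => ?_)
    exact hzero b (by omega) (mem_range.mp hb)
  have hIco : ∑ k ∈ Ico n (2*n+1), h k = ∑ j ∈ range (n+1), h (n+j) := by
    rw [Finset.sum_Ico_eq_sum_range, show 2*n+1-n = n+1 from by omega]
  have h0v : h 0 = -(bernoulli n)/n := by
    rw [hh]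
    simpa using hg0
  have hkey : ∑ j ∈ range (n+1), h (n+j) = (bernoulli n)/n := by
    have : h 0 + ∑ j ∈ range (n+1), h (n+j) = 0 := by
      rw [← hIco, ← hlow, hsplit, hsum]
    rw [h0v, neg_div] at this
    linarith
  have hterm : ∀ j ∈ range (n+1),
      ((-1 : ℚ) ^ (n + j) / (n + j)) * ((2 * n).choose (n + j)) *
        (stirling1 (n + j + 1) (j + 1) : ℚ) = h (n+j) := by
    intro j hj
    have e1 : stirling1 (n + j + 1) (j + 1) = Esym (n+j) n := by
      have := stirling1_eq_Esym (n+j) n (by omega)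
      rwa [show n + j + 1 - n = j + 1 from by omega] at this
    have e2 : ((Esym (n+j) n : ℕ) : ℚ) = ((n+j : ℕ):ℚ) * g.eval ((n+j : ℕ):ℚ) :=
      (hgk (n+j)).symm
    rw [e1, e2, hh]
    have hnj : ((n+j:ℕ):ℚ) ≠ 0 := by positivity
    push_cast at hnj ⊢
    field_simp
  rw [Finset.sum_congr rfl hterm, hkey]
  field_simp
end

section
/- For every non-negative integer n, the n-th Bernoulli number (with convention B_1 = -1/2) satisfies B_n = (n+1) * C(2n, n)^{-1} * ∑_{j=0}^{n} ((-1)^j / (j+1)) * C(2n, n+j) * S(n+j, j), where S denotes the Stirling number of the second kind. -/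
/-- The Stirling number of the second kind. -/
def stirling2 (n k : ℕ) : ℕ := rStirling2 0 n k

lemma stirling2_zero (k : ℕ) : stirling2 0 k = if k = 0 then 1 else 0 := by
  simp [stirling2, rStirling2]

lemma stirling2_succ_zero (n : ℕ) : stirling2 (n + 1) 0 = 0 := by
  simp [stirling2, rStirling2]

lemma stirling2_succ (n k : ℕ) :
    stirling2 (n + 1) (k + 1) = stirling2 n k + (k + 1) * stirling2 n (k + 1) := by
  simp [stirling2, rStirling2]

open PowerSeries

lemma derivative_exp' : d⁄dX ℚ (exp ℚ) = exp ℚ := by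
  ext n
  rw [coeff_derivative, coeff_exp, coeff_exp]
  have h : ((n+1).factorial : ℚ) = (n+1) * n.factorial := by
    rw [Nat.factorial_succ]; push_cast; ring
  have h0 : (n.factorial : ℚ) ≠ 0 := Nat.cast_ne_zero.2 n.factorial_ne_zero
  simp only [Algebra.algebraMap_self, RingHom.id_apply, h, one_div]
  field_simp

lemma coeff_exp_sub_one_pow (m j : ℕ) :
    PowerSeries.coeff m ((exp ℚ - 1) ^ j) =
      (j.factorial : ℚ) * stirling2 m j / m.factorial := by
  induction m generalizing j with
  | zero =>
    rw [coeff_zero_eq_constantCoeff, map_pow, map_sub, map_one, constantCoeff_exp, sub_self]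
    cases j with
    | zero => simp [stirling2_zero]
    | succ j => simp [stirling2_zero, zero_pow]
  | succ m ih =>
    cases j with
    | zero =>
      simp [stirling2_succ_zero, PowerSeries.coeff_one]
    | succ j =>
      have hD : d⁄dX ℚ ((exp ℚ - 1) ^ (j + 1)) =
          ((j : ℚ) + 1) • ((exp ℚ - 1) ^ (j + 1) + (exp ℚ - 1) ^ j) := by
        have := Derivation.leibniz_pow (d⁄dX ℚ) (a := exp ℚ - 1) (j + 1)
        rw [this]
        have hda : d⁄dX ℚ (exp ℚ - 1) = exp ℚ := by
          rw [map_sub, Derivation.map_one_eq_zero, sub_zero, derivative_exp']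
        rw [hda]
        simp only [Nat.add_sub_cancel, smul_eq_mul, nsmul_eq_mul,
          PowerSeries.smul_eq_C_mul, map_add, map_one, map_natCast]
        push_cast
        rw [pow_succ]
        ring
      have hc : (PowerSeries.coeff m) (d⁄dX ℚ ((exp ℚ - 1) ^ (j + 1))) =
          (PowerSeries.coeff (m + 1)) ((exp ℚ - 1) ^ (j + 1)) * (m + 1) :=
        coeff_derivative _ m
      rw [hD] at hc
      rw [map_smul, map_add, ih, ih] at hc
      have hm1 : ((m : ℚ) + 1) ≠ 0 := by positivity
      have heq : (PowerSeries.coeff (m + 1)) ((exp ℚ - 1) ^ (j + 1)) =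
          ((j : ℚ) + 1) • (((j + 1).factorial : ℚ) * stirling2 m (j + 1) / m.factorial +
            (j.factorial : ℚ) * stirling2 m j / m.factorial) / (m + 1) := by
        field_simp at hc ⊢
        linarith [hc]
      rw [heq, stirling2_succ]
      have hf1 : ((m + 1).factorial : ℚ) = (m + 1) * m.factorial := by
        rw [Nat.factorial_succ]; push_cast; ring
      have hf2 : ((j + 1).factorial : ℚ) = (j + 1) * j.factorial := by
        rw [Nat.factorial_succ]; push_cast; ring
      have h0 : (m.factorial : ℚ) ≠ 0 := Nat.cast_ne_zero.2 m.factorial_ne_zero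
      rw [hf1, hf2]
      push_cast
      field_simp
      rw [smul_eq_mul]
      field_simp
      ring

lemma bernoulli_key (n : ℕ) :
    (bernoulli n : ℚ) / n.factorial =
      ∑ j ∈ Finset.range (n + 1), (-1 : ℚ) ^ j * ((n + 1).choose (j + 1)) *
        ((j.factorial : ℚ) * stirling2 (n + j) j / (n + j).factorial) := by
  set E : ℚ⟦X⟧ := exp ℚ - 1 with hE
  set B : ℚ⟦X⟧ := bernoulliPowerSeries ℚ with hB
  have h1 : B * E = X := bernoulliPowerSeries_mul_exp_sub_one ℚ
  -- expansion
  have hs := sub_pow (X : ℚ⟦X⟧) E (n + 1)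
  rw [Finset.sum_range_succ] at hs
  have hlast : (-1 : ℚ⟦X⟧) ^ ((n+1) + (n+1)) * X ^ (n+1) * E ^ ((n+1) - (n+1)) *
      ((n+1).choose (n+1) : ℚ⟦X⟧) = X ^ (n+1) := by
    rw [Nat.sub_self, Nat.choose_self, pow_zero, Even.neg_one_pow ⟨n+1, rfl⟩]
    push_cast
    ring
  rw [hlast] at hs
  have expand : B * X ^ (n+1) = B * (X - E) ^ (n+1) -
      ∑ m ∈ Finset.range (n+1),
        ((-1 : ℚ⟦X⟧) ^ (m + (n+1)) * X ^ (m+1) * E ^ (n - m) * ((n+1).choose m : ℚ⟦X⟧)) := by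
    have hX : (X : ℚ⟦X⟧) ^ (n+1) = (X - E) ^ (n+1) -
        ∑ m ∈ Finset.range (n+1),
          ((-1 : ℚ⟦X⟧) ^ (m + (n+1)) * X ^ m * E ^ ((n+1) - m) * ((n+1).choose m : ℚ⟦X⟧)) := by
      rw [hs]; ring
    rw [hX, mul_sub, Finset.mul_sum]
    congr 1
    refine Finset.sum_congr rfl fun m hm => ?_
    have hm' : m ≤ n := Nat.lt_succ_iff.mp (Finset.mem_range.mp hm)
    have he : (n+1) - m = (n - m) + 1 := by omega
    rw [he, pow_succ]
    linear_combination ((-1 : ℚ⟦X⟧) ^ (m + (n+1)) * X ^ m * E ^ (n - m) *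
      ((n+1).choose m : ℚ⟦X⟧)) * h1
  -- take coefficient 2n+1
  have hco := congrArg (PowerSeries.coeff (2*n+1)) expand
  rw [map_sub, map_sum] at hco
  -- LHS coefficient
  have hBX : (PowerSeries.coeff (2*n+1)) (B * X ^ (n+1)) =
      (bernoulli n : ℚ) / n.factorial := by
    have : 2*n+1 = n + (n+1) := by omega
    rw [this, coeff_mul_X_pow]
    simp [hB, bernoulliPowerSeries, coeff_mk]
  -- vanishing term
  have hzero : (PowerSeries.coeff (2*n+1)) (B * (X - E) ^ (n+1)) = 0 := by
    have h2 : (X : ℚ⟦X⟧) ^ 2 ∣ (X - E) := by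
      rw [X_pow_dvd_iff]
      intro m hm
      interval_cases m
      · simp [hE, coeff_exp, PowerSeries.coeff_one]
      · simp [hE, coeff_exp, PowerSeries.coeff_one]
    have h3 : (X : ℚ⟦X⟧) ^ (2*(n+1)) ∣ (X - E) ^ (n+1) := by
      rw [pow_mul]
      exact pow_dvd_pow_of_dvd h2 (n+1)
    have h4 : (X : ℚ⟦X⟧) ^ (2*(n+1)) ∣ B * (X - E) ^ (n+1) :=
      Dvd.dvd.mul_left h3 B
    exact (X_pow_dvd_iff.mp h4) (2*n+1) (by omega)
  -- per-term coefficient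
  have hterm : ∀ m ∈ Finset.range (n+1),
      (PowerSeries.coeff (2*n+1))
        ((-1 : ℚ⟦X⟧) ^ (m + (n+1)) * X ^ (m+1) * E ^ (n - m) * ((n+1).choose m : ℚ⟦X⟧)) =
      (-1 : ℚ) ^ (m + (n+1)) * ((n+1).choose m : ℚ) *
        (((n-m).factorial : ℚ) * stirling2 (2*n-m) (n-m) / (2*n-m).factorial) := by
    intro m hm
    have hm' : m ≤ n := Nat.lt_succ_iff.mp (Finset.mem_range.mp hm)
    have hC : (C) ((-1 : ℚ) ^ (m + (n+1)) * ((n+1).choose m : ℚ)) =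
        (-1 : ℚ⟦X⟧) ^ (m + (n+1)) * ((n+1).choose m : ℚ⟦X⟧) := by
      simp [map_mul, map_pow, map_natCast]
    have hre : (-1 : ℚ⟦X⟧) ^ (m + (n+1)) * X ^ (m+1) * E ^ (n - m) * ((n+1).choose m : ℚ⟦X⟧) =
        (C) ((-1 : ℚ) ^ (m + (n+1)) * ((n+1).choose m : ℚ)) * (E ^ (n - m) * X ^ (m+1)) := by
      rw [hC]; ring
    rw [hre, coeff_C_mul]
    have hidx : 2*n+1 = (2*n - m) + (m+1) := by omega
    rw [hidx, coeff_mul_X_pow, coeff_exp_sub_one_pow]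
  rw [Finset.sum_congr rfl hterm, hBX, hzero, zero_sub] at hco
  rw [hco, ← Finset.sum_range_reflect fun j => (-1 : ℚ) ^ j * ((n + 1).choose (j + 1)) *
        ((j.factorial : ℚ) * stirling2 (n + j) j / (n + j).factorial), ← Finset.sum_neg_distrib]
  refine Finset.sum_congr rfl fun m hm => ?_
  have hm' : m ≤ n := Nat.lt_succ_iff.mp (Finset.mem_range.mp hm)
  have e1 : n + 1 - 1 - m = n - m := by omega
  have e2 : n + (n - m) = 2*n - m := by omega
  have e3 : (n+1).choose ((n - m) + 1) = (n+1).choose m := by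
    rw [show (n - m) + 1 = (n+1) - m by omega, Nat.choose_symm (show m ≤ n + 1 by omega)]
  have hsign : (-1 : ℚ) ^ (n - m) = -(-1 : ℚ) ^ (m + (n+1)) := by
    have h2 : m + (n+1) = (n - m) + (2*m + 1) := by omega
    rw [h2, pow_add, pow_add, pow_mul]
    simp
  rw [e1, e2, e3, hsign]
  ring

theorem bernoulli_eq_sum_stirling2 (n : ℕ) :
    bernoulli n = ((n : ℚ) + 1) * (((2 * n).choose n : ℚ))⁻¹ *
      ∑ j ∈ Finset.range (n + 1),
        ((-1 : ℚ) ^ j / (j + 1)) * ((2 * n).choose (n + j)) * stirling2 (n + j) j := by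
  have key := bernoulli_key n
  have h0' : (n.factorial : ℚ) ≠ 0 := Nat.cast_ne_zero.2 n.factorial_ne_zero
  rw [div_eq_iff h0'] at key
  rw [key, Finset.sum_mul, Finset.mul_sum]
  refine Finset.sum_congr rfl fun j hj => ?_
  have hj' : j ≤ n := Nat.lt_succ_iff.mp (Finset.mem_range.mp hj)
  have c1 : ((2*n).choose n : ℚ) = ((2*n).factorial : ℚ) / (n.factorial * n.factorial) := by
    rw [Nat.cast_choose ℚ (by omega : n ≤ 2*n), show 2*n - n = n by omega]
  have c2 : ((2*n).choose (n+j) : ℚ) =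
      ((2*n).factorial : ℚ) / ((n+j).factorial * (n-j).factorial) := by
    rw [Nat.cast_choose ℚ (by omega : n + j ≤ 2*n), show 2*n - (n+j) = n - j by omega]
  have c3 : ((n+1).choose (j+1) : ℚ) =
      ((n+1).factorial : ℚ) / ((j+1).factorial * (n-j).factorial) := by
    rw [Nat.cast_choose ℚ (by omega : j + 1 ≤ n + 1), show (n+1) - (j+1) = n - j by omega]
  have f1 : ((n+1).factorial : ℚ) = (n+1) * n.factorial := by
    rw [Nat.factorial_succ]; push_cast; ring
  have f2 : ((j+1).factorial : ℚ) = (j+1) * j.factorial := by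
    rw [Nat.factorial_succ]; push_cast; ring
  have h0 : (n.factorial : ℚ) ≠ 0 := Nat.cast_ne_zero.2 n.factorial_ne_zero
  have h1 : (j.factorial : ℚ) ≠ 0 := Nat.cast_ne_zero.2 j.factorial_ne_zero
  have h2 : ((n+j).factorial : ℚ) ≠ 0 := Nat.cast_ne_zero.2 (n+j).factorial_ne_zero
  have h3 : ((n-j).factorial : ℚ) ≠ 0 := Nat.cast_ne_zero.2 (n-j).factorial_ne_zero
  have h4 : ((2*n).factorial : ℚ) ≠ 0 := Nat.cast_ne_zero.2 (2*n).factorial_ne_zero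
  have h5 : ((j : ℚ) + 1) ≠ 0 := by positivity
  have h6 : ((n : ℚ) + 1) ≠ 0 := by positivity
  rw [c1, c2, c3, f1, f2]
  field_simp
end
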